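/- (Standard clique edge-weighting bound.) Let G be a graph on n vertices and let w be the standard clique edge-weighting of G. Then the total weight satisfies w(G) := Σ_{e ∈ E(G)} w(e) ≤ n²/4. -/

import Mathlib

open Finset

/-- The edge set of a graph on a finite vertex type, as a `Finset`. -/
noncomputable def edgeFinset' {V : Type*} [Fintype V] (G : SimpleGraph V) : Finset (Sym2 V) :=
  by classical exact G.edgeFinset

/-- The order of a largest clique of `G` containing (both endpoints of) the edge `e`. -/
noncomputable def edgeCliqueNum {V : Type*} (G : SimpleGraph V) (e : Sym2 V) : ℕ :=
  sSup {r | ∃ s : Finset V, G.IsNClique r s ∧ ∀ v ∈ e, v ∈ s}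

namespace SCEW

variable {V : Type*} [Fintype V]

/-- The weight of an edge. -/
noncomputable def w (G : SimpleGraph V) (e : Sym2 V) : ℝ :=
  (edgeCliqueNum G e : ℝ) / (2 * ((edgeCliqueNum G e : ℝ) - 1))

lemma bddAbove_cliqueSet (G : SimpleGraph V) (e : Sym2 V) :
    BddAbove {r | ∃ s : Finset V, G.IsNClique r s ∧ ∀ v ∈ e, v ∈ s} := by
  refine ⟨Fintype.card V, fun r ⟨s, hs, _⟩ => ?_⟩
  rw [← hs.2]
  exact s.card_le_univ.trans_eq (by simp)

lemma le_ecn {G : SimpleGraph V} {r : ℕ} {s : Finset V} {e : Sym2 V}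
    (hs : G.IsNClique r s) (he : ∀ v ∈ e, v ∈ s) : r ≤ edgeCliqueNum G e :=
  le_csSup (bddAbove_cliqueSet G e) ⟨s, hs, he⟩

lemma two_le_ecn {G : SimpleGraph V} {u v : V} (h : G.Adj u v) :
    2 ≤ edgeCliqueNum G s(u, v) := by
  classical
  refine le_ecn (s := {u, v}) ⟨?_, ?_⟩ ?_
  · intro x hx y hy hxy
    simp only [coe_insert, coe_singleton, Set.mem_insert_iff, Set.mem_singleton_iff] at hx hy
    rcases hx with rfl | rfl <;> rcases hy with rfl | rfl
    · exact absurd rfl hxy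
    · exact h
    · exact h.symm
    · exact absurd rfl hxy
  · exact card_pair h.ne
  · intro x hx
    rw [Sym2.mem_iff] at hx
    rcases hx with rfl | rfl <;> simp

lemma weight_mono {a b : ℕ} (ha : 2 ≤ a) (hab : a ≤ b) :
    (b : ℝ) / (2 * ((b : ℝ) - 1)) ≤ (a : ℝ) / (2 * ((a : ℝ) - 1)) := by
  have ha' : (2 : ℝ) ≤ a := by exact_mod_cast ha
  have hb' : (a : ℝ) ≤ b := by exact_mod_cast hab
  rw [div_le_div_iff₀ (by nlinarith) (by nlinarith)]
  nlinarith

lemma w_le {G : SimpleGraph V} {u v : V} (h : G.Adj u v) {r : ℕ} {s : Finset V}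
    (hs : G.IsNClique r s) (hu : u ∈ s) (hv : v ∈ s) (hr : 2 ≤ r) :
    w G s(u, v) ≤ (r : ℝ) / (2 * ((r : ℝ) - 1)) := by
  have hle : r ≤ edgeCliqueNum G s(u, v) := by
    refine le_ecn hs ?_
    intro x hx
    rw [Sym2.mem_iff] at hx
    rcases hx with rfl | rfl <;> assumption
  exact weight_mono hr hle

lemma w_nonneg {G : SimpleGraph V} {u v : V} (h : G.Adj u v) : 0 ≤ w G s(u, v) := by
  have h2 := two_le_ecn h
  have h2' : (2 : ℝ) ≤ (edgeCliqueNum G s(u, v) : ℝ) := by exact_mod_cast h2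
  unfold w
  apply div_nonneg (by linarith) (by linarith)

open scoped Classical in
/-- Ordered-pair version of the weight. -/
noncomputable def F (G : SimpleGraph V) (u v : V) : ℝ :=
  if G.Adj u v then w G s(u, v) else 0

lemma F_nonneg (G : SimpleGraph V) (u v : V) : 0 ≤ F G u v := by
  unfold F
  split
  · exact w_nonneg ‹_›
  · exact le_refl 0

lemma F_self (G : SimpleGraph V) (u : V) : F G u u = 0 := by
  simp [F]

lemma F_symm (G : SimpleGraph V) (u v : V) : F G u v = F G v u := by
  unfold F
  rw [Sym2.eq_swap, G.adj_comm]

lemma F_of_adj {G : SimpleGraph V} {u v : V} (h : G.Adj u v) : F G u v = w G s(u, v) := by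
  simp [F, h]

lemma F_of_not_adj {G : SimpleGraph V} {u v : V} (h : ¬ G.Adj u v) : F G u v = 0 := by
  simp [F, h]

lemma key (G : SimpleGraph V) (n : ℕ) : ∀ A : Finset V, A.card = n →
    ∑ u ∈ A, ∑ v ∈ A, F G u v ≤ (n : ℝ) ^ 2 / 2 := by
  induction n using Nat.strong_induction_on with
  | _ n ih =>
  intro A hA
  classical
  by_cases hedge : ∃ u ∈ A, ∃ v ∈ A, G.Adj u v
  · obtain ⟨u0, hu0, v0, hv0, hadj⟩ := hedge
    -- the cliques inside `A`
    set T : Finset (Finset V) := A.powerset.filter (fun s => G.IsClique (s : Set V)) with hT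
    have hT0 : ({u0, v0} : Finset V) ∈ T := by
      rw [hT, mem_filter, mem_powerset]
      refine ⟨insert_subset hu0 (by simpa using hv0), ?_⟩
      intro x hx y hy hxy
      simp only [coe_insert, coe_singleton, Set.mem_insert_iff, Set.mem_singleton_iff] at hx hy
      rcases hx with rfl | rfl <;> rcases hy with rfl | rfl
      · exact absurd rfl hxy
      · exact hadj
      · exact hadj.symm
      · exact absurd rfl hxy
    obtain ⟨K, hKT, hKmax⟩ := T.exists_max_image Finset.card ⟨_, hT0⟩
    rw [hT, mem_filter, mem_powerset] at hKT
    obtain ⟨hKA, hKclique⟩ := hKT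
    set r := K.card with hr
    have hmax : ∀ s : Finset V, s ⊆ A → G.IsClique (s : Set V) → s.card ≤ r := by
      intro s hsA hscl
      exact hKmax s (by rw [hT, mem_filter, mem_powerset]; exact ⟨hsA, hscl⟩)
    have hr2 : 2 ≤ r := by
      have := hKmax _ hT0
      rwa [card_pair hadj.ne] at this
    have hKN : G.IsNClique r K := ⟨hKclique, rfl⟩
    set D := A \ K with hD
    have hdisj : Disjoint K D := disjoint_sdiff
    have hAun : A = K ∪ D := (union_sdiff_of_subset hKA).symm
    set c : ℝ := (r : ℝ) / (2 * ((r : ℝ) - 1)) with hc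
    have hrR : (2 : ℝ) ≤ (r : ℝ) := by exact_mod_cast hr2
    -- row bound inside K
    have hrowK : ∀ u ∈ K, ∑ v ∈ K, F G u v ≤ (r : ℝ) / 2 := by
      intro u hu
      rw [← Finset.sum_erase K (F_self G u)]
      have h1 : ∑ v ∈ K.erase u, F G u v ≤ (K.erase u).card • c := by
        refine Finset.sum_le_card_nsmul _ _ _ ?_
        intro v hv
        have hvK := mem_of_mem_erase hv
        have hne : v ≠ u := ne_of_mem_erase hv
        have hadj' : G.Adj u v := hKclique hu hvK (Ne.symm hne)
        rw [F_of_adj hadj']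
        exact w_le hadj' hKN hu hvK hr2
      rw [card_erase_of_mem hu] at h1
      refine h1.trans ?_
      rw [nsmul_eq_mul, Nat.cast_sub (by omega), Nat.cast_one, hc]
      rw [mul_div_assoc']
      rw [div_le_div_iff₀ (by nlinarith) (by norm_num)]
      ring_nf
      nlinarith
    -- cross row bound
    have hrowD : ∀ v ∈ D, ∑ u ∈ K, F G u v ≤ (r : ℝ) / 2 := by
      intro v hvD
      have hvA : v ∈ A := (mem_sdiff.mp hvD).1
      have hvK : v ∉ K := (mem_sdiff.mp hvD).2
      set S := K.filter (fun u => G.Adj u v) with hS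
      have hsum : ∑ u ∈ K, F G u v = ∑ u ∈ S, F G u v := by
        rw [hS]
        rw [Finset.sum_filter_of_ne]
        intro u hu hne
        by_contra hnadj
        exact hne (F_of_not_adj hnadj)
      rw [hsum]
      rcases S.eq_empty_or_nonempty with hSe | hSne
      · rw [hSe, sum_empty]; exact div_nonneg (Nat.cast_nonneg _) (by norm_num)
      · set s := S.card with hs
        have hs1 : 1 ≤ s := Finset.card_pos.mpr hSne
        have hvS : v ∉ S := fun h => hvK (mem_of_mem_filter v h)
        have hCcl : G.IsNClique (s + 1) (insert v S) := by
          constructor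
          · intro x hx y hy hxy
            simp only [coe_insert, Set.mem_insert_iff, mem_coe] at hx hy
            rcases hx with rfl | hx <;> rcases hy with rfl | hy
            · exact absurd rfl hxy
            · exact ((mem_filter.mp hy).2).symm
            · exact (mem_filter.mp hx).2
            · exact hKclique (mem_filter.mp hx).1 (mem_filter.mp hy).1 hxy
          · rw [card_insert_of_notMem hvS]
        have hCsub : insert v S ⊆ A := by
          refine insert_subset hvA ?_
          exact (filter_subset _ _).trans hKA
        have hsr : s + 1 ≤ r := by
          have := hmax _ hCsub hCcl.1
          rwa [card_insert_of_notMem hvS, ← hs] at this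
        have h1 : ∑ u ∈ S, F G u v ≤
            s • (((s + 1 : ℕ) : ℝ) / (2 * (((s + 1 : ℕ) : ℝ) - 1))) := by
          refine Finset.sum_le_card_nsmul _ _ _ ?_
          intro u hu
          have hadj' : G.Adj u v := (mem_filter.mp hu).2
          rw [F_of_adj hadj']
          exact w_le hadj' hCcl (mem_insert_of_mem hu) (mem_insert_self v S) (by omega)
        refine h1.trans ?_
        have hsR : (1 : ℝ) ≤ (s : ℝ) := by exact_mod_cast hs1
        have hsrR : (s : ℝ) + 1 ≤ (r : ℝ) := by exact_mod_cast hsr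
        rw [nsmul_eq_mul]
        push_cast
        rw [← mul_div_assoc, div_le_div_iff₀ (by nlinarith) (by norm_num)]
        nlinarith [mul_le_mul_of_nonneg_left hsrR (Nat.cast_nonneg _ : (0:ℝ) ≤ (s:ℝ))]
    -- bound on the K-block
    have hKK : ∑ u ∈ K, ∑ v ∈ K, F G u v ≤ (r : ℝ) * ((r : ℝ) / 2) := by
      calc ∑ u ∈ K, ∑ v ∈ K, F G u v ≤ r • ((r : ℝ) / 2) :=
            Finset.sum_le_card_nsmul _ _ _ hrowK
        _ = (r : ℝ) * ((r : ℝ) / 2) := by rw [nsmul_eq_mul]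
    -- cross blocks
    have hKD : ∑ u ∈ K, ∑ v ∈ D, F G u v ≤ (D.card : ℝ) * ((r : ℝ) / 2) := by
      rw [Finset.sum_comm]
      calc ∑ v ∈ D, ∑ u ∈ K, F G u v ≤ D.card • ((r : ℝ) / 2) :=
            Finset.sum_le_card_nsmul _ _ _ hrowD
        _ = (D.card : ℝ) * ((r : ℝ) / 2) := by rw [nsmul_eq_mul]
    have hDK : ∑ u ∈ D, ∑ v ∈ K, F G u v ≤ (D.card : ℝ) * ((r : ℝ) / 2) := by
      have : ∑ u ∈ D, ∑ v ∈ K, F G u v = ∑ u ∈ K, ∑ v ∈ D, F G u v := by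
        rw [Finset.sum_comm]
        exact Finset.sum_congr rfl fun u _ => Finset.sum_congr rfl fun v _ => (F_symm G u v).symm
      rw [this]; exact hKD
    -- induction on D
    have hDcard : D.card = n - r := by rw [hD, card_sdiff_of_subset hKA, hA]
    have hrn : r ≤ n := hA ▸ card_le_card hKA
    have hDD : ∑ u ∈ D, ∑ v ∈ D, F G u v ≤ ((n - r : ℕ) : ℝ) ^ 2 / 2 := by
      refine ih (n - r) (by omega) D hDcard
    -- put it together
    have hsplit : ∑ u ∈ A, ∑ v ∈ A, F G u v =
        (∑ u ∈ K, ∑ v ∈ K, F G u v) + (∑ u ∈ K, ∑ v ∈ D, F G u v) +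
        (∑ u ∈ D, ∑ v ∈ K, F G u v) + (∑ u ∈ D, ∑ v ∈ D, F G u v) := by
      rw [hAun, Finset.sum_union hdisj]
      simp only [Finset.sum_union hdisj, Finset.sum_add_distrib]
      ring
    rw [hsplit]
    have hcast : ((n - r : ℕ) : ℝ) = (n : ℝ) - (r : ℝ) := by
      rw [Nat.cast_sub hrn]
    have hDcast : (D.card : ℝ) = (n : ℝ) - (r : ℝ) := by
      rw [hDcard, hcast]
    rw [hcast] at hDD
    rw [hDcast] at hKD hDK
    nlinarith [hKK, hKD, hDK, hDD]
  · push_neg at hedge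
    have : ∑ u ∈ A, ∑ v ∈ A, F G u v = 0 := by
      refine Finset.sum_eq_zero fun u hu => Finset.sum_eq_zero fun v hv => ?_
      exact F_of_not_adj (hedge u hu v hv)
    rw [this]
    positivity

lemma double_sum_eq (G : SimpleGraph V) :
    ∑ u : V, ∑ v : V, F G u v = 2 * ∑ e ∈ edgeFinset' G, w G e := by
  classical
  have hEF : edgeFinset' G = G.edgeFinset := by
    unfold edgeFinset'
    congr 1
  rw [hEF]
  rw [← Finset.sum_product']
  have h1 : ∑ p ∈ (univ : Finset V) ×ˢ univ, F G p.1 p.2 =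
      ∑ p ∈ ((univ : Finset V) ×ˢ univ).filter (fun p => G.Adj p.1 p.2), w G s(p.1, p.2) := by
    rw [Finset.sum_filter]
    exact Finset.sum_congr rfl fun p _ => by
      by_cases h : G.Adj p.1 p.2
      · simp [h, F_of_adj h]
      · simp [h, F_of_not_adj h]
  rw [h1]
  have hmaps : ∀ p ∈ ((univ : Finset V) ×ˢ univ).filter (fun p => G.Adj p.1 p.2),
      s(p.1, p.2) ∈ G.edgeFinset := by
    intro p hp
    rw [SimpleGraph.mem_edgeFinset]
    exact (mem_filter.mp hp).2
  rw [← Finset.sum_fiberwise_of_maps_to hmaps (fun p => w G s(p.1, p.2))]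
  rw [Finset.mul_sum]
  refine Finset.sum_congr rfl fun e he => ?_
  rw [SimpleGraph.mem_edgeFinset] at he
  induction e with
  | h a b =>
    have hab : G.Adj a b := he
    have hfib : (((univ : Finset V) ×ˢ univ).filter (fun p => G.Adj p.1 p.2)).filter
        (fun p => s(p.1, p.2) = s(a, b)) = {(a, b), (b, a)} := by
      ext ⟨x, y⟩
      simp only [mem_filter, mem_product, mem_univ, true_and, mem_insert, mem_singleton,
        Sym2.eq_iff, Prod.mk.injEq]
      constructor
      · rintro ⟨_, (⟨rfl, rfl⟩ | ⟨rfl, rfl⟩)⟩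
        · exact Or.inl ⟨rfl, rfl⟩
        · exact Or.inr ⟨rfl, rfl⟩
      · rintro (⟨rfl, rfl⟩ | ⟨rfl, rfl⟩)
        · exact ⟨hab, Or.inl ⟨rfl, rfl⟩⟩
        · exact ⟨hab.symm, Or.inr ⟨rfl, rfl⟩⟩
    rw [hfib]
    rw [Finset.sum_pair (by intro h; rw [Prod.mk.injEq] at h; exact hab.ne h.1)]
    have e1 : s(a, b) = s(a, b) := rfl
    have e2 : s(b, a) = s(a, b) := Sym2.eq_swap
    rw [e2]
    ring

end SCEW

theorem standard_clique_edge_weighting_bound {V : Type*} [Fintype V]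
    (G : SimpleGraph V) (n : ℕ) (hn : Fintype.card V = n) :
    ∑ e ∈ edgeFinset' G,
        (edgeCliqueNum G e : ℝ) / (2 * ((edgeCliqueNum G e : ℝ) - 1)) ≤
      (n : ℝ) ^ 2 / 4 := by
  have h1 : ∑ e ∈ edgeFinset' G,
      (edgeCliqueNum G e : ℝ) / (2 * ((edgeCliqueNum G e : ℝ) - 1)) =
      ∑ e ∈ edgeFinset' G, SCEW.w G e := rfl
  rw [h1]
  have h2 := SCEW.double_sum_eq G
  have h3 := SCEW.key G n Finset.univ (by simpa using hn)
  linarith
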